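/- Reduction to controlled decompositions (Lemma 'pbred', pointwise version): let v_1,…,v_N : Ω̄ → S^{d-1} be continuous on a compact connected Ω̄ satisfying the controlled decomposition hypothesis, and let δ ∈ (0,1) be the constant from the dichotomy lemma. Let x ∈ Ω̄, z ∈ ℝ^d, and ρ ∈ ℝ_+^N with Σ_k ρ_k v_k(x) = z. Then there exists ρ̄ ∈ ℝ_+^N with ρ̄_k ≤ ρ_k for all k, Σ_k ρ̄_k v_k(x) = z, and Σ_k ρ̄_k ≤ (1/δ)|z|. -/

import Mathlib

open scoped BigOperators RealInnerProductSpace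

lemma hull_iff {d N : ℕ} (v : Fin N → EuclideanSpace ℝ (Fin d) → EuclideanSpace ℝ (Fin d))
    (I : Finset (Fin N)) (y a : EuclideanSpace ℝ (Fin d)) :
    a ∈ convexHull ℝ {w | ∃ i ∈ I, w = v i y} ↔
      ∃ μ : Fin N → ℝ, (∀ k, 0 ≤ μ k) ∧ (∀ k, k ∉ I → μ k = 0) ∧
        (∑ k, μ k = 1) ∧ (∑ k, μ k • v k y = a) := by
  classical
  constructor
  · intro ha
    rcases I.eq_empty_or_nonempty with rfl | ⟨i0, hi0⟩
    · simp only [Finset.notMem_empty, false_and, exists_false, Set.setOf_false,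
        convexHull_empty, Set.mem_empty_iff_false] at ha
    have hset : {w | ∃ i ∈ I, w = v i y} = ↑(I.image fun i => v i y) := by
      ext w
      simp [eq_comm]
    rw [hset, Finset.convexHull_eq] at ha
    obtain ⟨w, hw0, hw1, hwc⟩ := ha
    set s := I.image fun i => v i y with hs
    set r : EuclideanSpace ℝ (Fin d) → Fin N :=
      fun q => if h : ∃ i ∈ I, v i y = q then h.choose else i0 with hr
    have hrI : ∀ q ∈ s, r q ∈ I ∧ v (r q) y = q := by
      intro q hq
      have hq' : ∃ i ∈ I, v i y = q := by
        simpa [hs, Finset.mem_image] using hq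
      simp only [hr, dif_pos hq']
      exact ⟨hq'.choose_spec.1, hq'.choose_spec.2⟩
    refine ⟨fun j => ∑ q ∈ s.filter (fun q => r q = j), w q, ?_, ?_, ?_, ?_⟩
    · intro k
      exact Finset.sum_nonneg fun q hq => hw0 q (Finset.mem_filter.mp hq).1
    · intro k hk
      apply Finset.sum_eq_zero
      intro q hq
      obtain ⟨hqs, hqr⟩ := Finset.mem_filter.mp hq
      exact absurd (hqr ▸ (hrI q hqs).1) hk
    · rw [← Finset.sum_fiberwise_of_maps_to (fun q hq => Finset.mem_univ (r q)) w] at hw1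
      exact hw1
    · have hc : s.centerMass w id = ∑ q ∈ s, w q • q := by
        rw [Finset.centerMass_eq_of_sum_1 _ _ hw1]; rfl
      rw [hc] at hwc
      rw [← hwc, ← Finset.sum_fiberwise_of_maps_to (fun q hq => Finset.mem_univ (r q))
        (fun q => w q • q)]
      refine Finset.sum_congr rfl fun j _ => ?_
      rw [Finset.sum_smul]
      refine Finset.sum_congr rfl fun q hq => ?_
      obtain ⟨hqs, hqr⟩ := Finset.mem_filter.mp hq
      rw [← hqr, (hrI q hqs).2]
  · rintro ⟨μ, hμ0, hμI, hμ1, hμa⟩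
    have hsum : ∑ i ∈ I, μ i = 1 := by
      rw [← hμ1]
      exact (Finset.sum_subset (Finset.subset_univ I) fun k _ hk => hμI k hk)
    have := Finset.centerMass_mem_convexHull (s := {w | ∃ i ∈ I, w = v i y}) I
      (w := μ) (fun i hi => hμ0 i) (by rw [hsum]; norm_num)
      (z := fun i => v i y) (fun i hi => ⟨i, hi, rfl⟩)
    rwa [Finset.centerMass_eq_of_sum_1 _ _ hsum,
      Finset.sum_subset (Finset.subset_univ I) (fun k _ hk => by rw [hμI k hk, zero_smul]),
      hμa] at this

lemma quant {d N : ℕ} (v : Fin N → EuclideanSpace ℝ (Fin d) → EuclideanSpace ℝ (Fin d))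
    (y : EuclideanSpace ℝ (Fin d)) (C : ℝ) (hC : 0 < C)
    (hdec : ∀ z : EuclideanSpace ℝ (Fin d), ‖z‖ = 1 →
      ∀ ξ' : Fin N → ℝ, (∀ k, 0 ≤ ξ' k) →
        ∃ Z : Fin N → ℝ, (∀ k, 0 ≤ Z k) ∧ (∑ k, Z k • v k y = z) ∧
          (∀ Z' : Fin N → ℝ, (∀ k, 0 ≤ Z' k) → ∑ k, Z' k • v k y = z →
            ∑ k, Z k * ξ' k ≤ ∑ k, Z' k * ξ' k) ∧ (∑ k, Z k ≤ C))
    (I : Finset (Fin N))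
    (h0 : (0 : EuclideanSpace ℝ (Fin d)) ∉ convexHull ℝ {w | ∃ i ∈ I, w = v i y}) :
    ∀ w ∈ convexHull ℝ {w | ∃ i ∈ I, w = v i y}, 1 / C ≤ ‖w‖ := by
  classical
  rcases I.eq_empty_or_nonempty with rfl | ⟨i0, hi0⟩
  · intro w hw
    simp only [Finset.notMem_empty, false_and, exists_false, Set.setOf_false,
      convexHull_empty, Set.mem_empty_iff_false] at hw
  set S := convexHull ℝ {w | ∃ i ∈ I, w = v i y} with hS
  have hfin : ({w | ∃ i ∈ I, w = v i y} : Set (EuclideanSpace ℝ (Fin d))).Finite := by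
    have hsub : {w | ∃ i ∈ I, w = v i y} ⊆ (fun i => v i y) '' ↑I := by
      rintro w ⟨i, hi, rfl⟩; exact ⟨i, hi, rfl⟩
    exact Set.Finite.subset (I.finite_toSet.image _) hsub
  have hScomp : IsCompact S := hfin.isCompact_convexHull ℝ
  have hSne : S.Nonempty := ⟨v i0 y, subset_convexHull ℝ _ ⟨i0, hi0, rfl⟩⟩
  obtain ⟨p, hpS, hpmin⟩ := hScomp.exists_isMinOn hSne continuous_norm.continuousOn
  have hp0 : p ≠ 0 := fun h => h0 (h ▸ hpS)
  have hε : 0 < ‖p‖ := norm_pos_iff.mpr hp0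
  set ε := ‖p‖ with hεdef
  -- variational inequality
  have hvar : ∀ w ∈ S, ε ^ 2 ≤ ⟪p, w⟫ := by
    intro w hw
    have hconv : Convex ℝ S := convex_convexHull ℝ _
    have ht : ∀ t : ℝ, 0 < t → t ≤ 1 →
        0 ≤ 2 * ⟪p, w - p⟫ + t * ‖w - p‖ ^ 2 := by
      intro t ht0 ht1
      have hmem : p + t • (w - p) ∈ S := by
        have h := hconv hpS hw (by linarith : (0:ℝ) ≤ 1 - t) ht0.le (by ring)
        convert h using 1
        module
      have h1 : ε ≤ ‖p + t • (w - p)‖ := hpmin hmem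
      have h2 : ε ^ 2 ≤ ‖p + t • (w - p)‖ ^ 2 := by
        have := norm_nonneg (p + t • (w - p))
        nlinarith
      have h3 : ‖p + t • (w - p)‖ ^ 2
          = ε ^ 2 + 2 * (t * ⟪p, w - p⟫) + t ^ 2 * ‖w - p‖ ^ 2 := by
        rw [norm_add_sq_real, real_inner_smul_right, norm_smul,
          Real.norm_eq_abs, abs_of_pos ht0, mul_pow]
      nlinarith
    have hc : 0 ≤ ⟪p, w - p⟫ := by
      by_contra hcon
      push_neg at hcon
      set c := ⟪p, w - p⟫ with hcdef
      set b := ‖w - p‖ ^ 2 with hb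
      have hbnn : 0 ≤ b := by positivity
      set t := min 1 (-c / (b + 1)) with htdef
      have ht0 : 0 < t := lt_min one_pos (div_pos (by linarith) (by linarith))
      have ht1 : t ≤ 1 := min_le_left _ _
      have hkey := ht t ht0 ht1
      have htle : t * (b + 1) ≤ -c :=
        (le_div_iff₀ (by linarith : (0:ℝ) < b + 1)).mp (min_le_right _ _)
      nlinarith
    rw [inner_sub_right] at hc
    have hpp : ⟪p, p⟫ = ε ^ 2 := real_inner_self_eq_norm_sq p
    linarith
  -- decomposition of p
  obtain ⟨lam, hlam0, hlamI, hlam1, hlamp⟩ := (hull_iff v I y p).mp hpS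
  -- KKT: inner products equal ε² on the support of lam
  have hiK : ∀ k, 0 < lam k → ⟪v k y, p⟫ = ε ^ 2 := by
    intro k hk
    have hterm : ∀ j, 0 ≤ lam j * (⟪v j y, p⟫ - ε ^ 2) := by
      intro j
      rcases eq_or_lt_of_le (hlam0 j) with h | h
      · rw [← h]; ring_nf; exact le_refl _
      · have hjI : j ∈ I := by
          by_contra hjI
          exact absurd (hlamI j hjI) (ne_of_gt h)
        have : v j y ∈ S := subset_convexHull ℝ _ ⟨j, hjI, rfl⟩
        have h2 := hvar _ this
        rw [real_inner_comm] at h2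
        nlinarith
    have hsum0 : ∑ j, lam j * (⟪v j y, p⟫ - ε ^ 2) = 0 := by
      have h1 : ∑ j, lam j * ⟪v j y, p⟫ = ε ^ 2 := by
        have : ⟪∑ j, lam j • v j y, p⟫ = ∑ j, lam j * ⟪v j y, p⟫ := by
          rw [sum_inner]
          exact Finset.sum_congr rfl fun j _ => real_inner_smul_left _ _ _
        rw [hlamp] at this
        rw [← this, real_inner_self_eq_norm_sq]
      have h2 : ∑ j, lam j * ε ^ 2 = ε ^ 2 := by
        rw [← Finset.sum_mul, hlam1, one_mul]
      simp only [mul_sub]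
      rw [Finset.sum_sub_distrib, h1, h2, sub_self]
    have := (Finset.sum_eq_zero_iff_of_nonneg (fun j _ => hterm j)).mp hsum0 k (Finset.mem_univ k)
    rcases mul_eq_zero.mp this with h | h
    · exact absurd h (ne_of_gt hk)
    · linarith [sub_eq_zero.mp h]
  -- apply controlled decomposition to u = ε⁻¹ • p
  set u := ε⁻¹ • p with hu
  have hunorm : ‖u‖ = 1 := by
    rw [hu, norm_smul, Real.norm_eq_abs, abs_of_pos (inv_pos.mpr hε)]
    field_simp
    exact hεdef.symm
  set ξ : Fin N → ℝ := fun k => if 0 < lam k then 0 else 1 with hξ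
  have hξ0 : ∀ k, 0 ≤ ξ k := by
    intro k; rw [hξ]; dsimp only; split <;> norm_num
  obtain ⟨Z, hZ0, hZsum, hZmin, hZC⟩ := hdec u hunorm ξ hξ0
  -- competitor
  set Z' : Fin N → ℝ := fun k => ε⁻¹ * lam k with hZ'
  have hZ'0 : ∀ k, 0 ≤ Z' k := fun k => mul_nonneg (inv_pos.mpr hε).le (hlam0 k)
  have hZ'sum : ∑ k, Z' k • v k y = u := by
    rw [hu, ← hlamp, Finset.smul_sum]
    exact Finset.sum_congr rfl fun k _ => by rw [mul_smul]
  have hmin := hZmin Z' hZ'0 hZ'sum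
  have hZ'ξ : ∑ k, Z' k * ξ k = 0 := by
    apply Finset.sum_eq_zero
    intro k _
    rw [hξ, hZ']
    dsimp only
    split
    · ring
    · next h =>
      have : lam k = 0 := le_antisymm (not_lt.mp h) (hlam0 k)
      rw [this]; ring
  have hZsupp : ∀ k, ¬ (0 < lam k) → Z k = 0 := by
    intro k hk
    have hterm : ∀ j ∈ Finset.univ, 0 ≤ Z j * ξ j :=
      fun j _ => mul_nonneg (hZ0 j) (hξ0 j)
    have h0' : ∑ j, Z j * ξ j = 0 :=
      le_antisymm (hZ'ξ ▸ hmin) (Finset.sum_nonneg hterm)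
    have := (Finset.sum_eq_zero_iff_of_nonneg hterm).mp h0' k (Finset.mem_univ k)
    rw [hξ] at this
    simpa [hk] using this
  -- conclude 1 = ε * ∑ Z
  have hone : (1:ℝ) = ε * ∑ k, Z k := by
    have h1 : ⟪u, u⟫ = 1 := by rw [real_inner_self_eq_norm_sq, hunorm]; norm_num
    have h2 : ⟪∑ k, Z k • v k y, u⟫ = ∑ k, Z k * ⟪v k y, u⟫ := by
      rw [sum_inner]
      exact Finset.sum_congr rfl fun j _ => real_inner_smul_left _ _ _
    rw [hZsum, h1] at h2
    have h3 : ∀ k, Z k * ⟪v k y, u⟫ = Z k * ε := by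
      intro k
      by_cases hk : 0 < lam k
      · have := hiK k hk
        rw [hu, real_inner_smul_right, this]
        field_simp
      · rw [hZsupp k hk]; ring
    rw [h2, Finset.sum_congr rfl fun k _ => h3 k, ← Finset.sum_mul]
    ring
  have hεC : 1 / C ≤ ε := by
    rw [div_le_iff₀ hC]
    calc (1:ℝ) = ε * ∑ k, Z k := hone
    _ ≤ ε * C := by apply mul_le_mul_of_nonneg_left hZC hε.le
  intro w hw
  exact le_trans hεC (hpmin hw)

lemma dich {d N : ℕ} (K : Set (EuclideanSpace ℝ (Fin d)))
    (hKcomp : IsCompact K) (hKconn : IsConnected K)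
    (v : Fin N → EuclideanSpace ℝ (Fin d) → EuclideanSpace ℝ (Fin d))
    (hv_cont : ∀ k, ContinuousOn (v k) K)
    (C : ℝ) (hC : 0 < C)
    (hctrl : ∀ x ∈ K, ∀ z : EuclideanSpace ℝ (Fin d), ‖z‖ = 1 →
      ∀ ξ' : Fin N → ℝ, (∀ k, 0 ≤ ξ' k) →
        ∃ Z : Fin N → ℝ, (∀ k, 0 ≤ Z k) ∧ (∑ k, Z k • v k x = z) ∧
          (∀ Z' : Fin N → ℝ, (∀ k, 0 ≤ Z' k) → ∑ k, Z' k • v k x = z →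
            ∑ k, Z k * ξ' k ≤ ∑ k, Z' k * ξ' k) ∧ (∑ k, Z k ≤ C))
    (I : Finset (Fin N)) (x : EuclideanSpace ℝ (Fin d)) (hx : x ∈ K)
    (h0 : (0 : EuclideanSpace ℝ (Fin d)) ∉ convexHull ℝ {w | ∃ i ∈ I, w = v i x}) :
    ∀ y ∈ K, (0 : EuclideanSpace ℝ (Fin d)) ∉ convexHull ℝ {w | ∃ i ∈ I, w = v i y} := by
  classical
  haveI : CompactSpace ↥K := isCompact_iff_compactSpace.mp hKcomp
  haveI : PreconnectedSpace ↥K := Subtype.preconnectedSpace hKconn.isPreconnected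
  set A : Set ↥K :=
    {y | (0 : EuclideanSpace ℝ (Fin d)) ∈ convexHull ℝ {w | ∃ i ∈ I, w = v i ↑y}} with hA
  -- continuity of restricted vector fields
  have hvK : ∀ k, Continuous fun y : ↥K => v k ↑y := by
    intro k
    exact continuousOn_iff_continuous_restrict.mp (hv_cont k)
  -- A is closed
  have hclosed : IsClosed A := by
    set Z : Set ((Fin N → ℝ) × ↥K) :=
      {q | (∀ k, 0 ≤ q.1 k) ∧ (∀ k, k ∉ I → q.1 k = 0) ∧ (∑ k, q.1 k = 1) ∧
        (∑ k, q.1 k • v k ↑q.2 = 0)} with hZ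
    have h1 : ∀ k, Continuous fun q : (Fin N → ℝ) × ↥K => q.1 k :=
      fun k => (continuous_apply k).comp continuous_fst
    have hZclosed : IsClosed Z := by
      have c1 : IsClosed {q : (Fin N → ℝ) × ↥K | ∀ k, 0 ≤ q.1 k} := by
        rw [Set.setOf_forall]
        exact isClosed_iInter fun k => isClosed_le continuous_const (h1 k)
      have c2 : IsClosed {q : (Fin N → ℝ) × ↥K | ∀ k, k ∉ I → q.1 k = 0} := by
        rw [Set.setOf_forall]
        refine isClosed_iInter fun k => ?_
        by_cases hk : k ∈ I
        · simp [hk]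
        · simpa [hk] using isClosed_eq (h1 k) continuous_const
      have c3 : IsClosed {q : (Fin N → ℝ) × ↥K | ∑ k, q.1 k = 1} :=
        isClosed_eq (continuous_finset_sum _ fun k _ => h1 k) continuous_const
      have c4 : IsClosed {q : (Fin N → ℝ) × ↥K | ∑ k, q.1 k • v k ↑q.2 = 0} := by
        refine isClosed_eq (continuous_finset_sum _ fun k _ => ?_) continuous_const
        exact (h1 k).smul ((hvK k).comp continuous_snd)
      exact (c1.inter (c2.inter (c3.inter c4)))
    have hZsub : Z ⊆ (Set.univ.pi fun _ : Fin N => Set.Icc (0:ℝ) 1) ×ˢ Set.univ := by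
      rintro ⟨μ, y⟩ ⟨hμ0, hμI, hμ1, hμa⟩
      refine ⟨fun k _ => ⟨hμ0 k, ?_⟩, Set.mem_univ _⟩
      calc μ k ≤ ∑ j, μ j := Finset.single_le_sum (fun j _ => hμ0 j) (Finset.mem_univ k)
      _ = 1 := hμ1
    have hZcomp : IsCompact Z :=
      IsCompact.of_isClosed_subset
        ((isCompact_univ_pi fun _ => isCompact_Icc).prod isCompact_univ) hZclosed hZsub
    have hAim : A = Prod.snd '' Z := by
      ext y
      constructor
      · intro hy
        obtain ⟨μ, hμ0, hμI, hμ1, hμa⟩ := (hull_iff v I (↑y) 0).mp hy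
        exact ⟨(μ, y), ⟨hμ0, hμI, hμ1, hμa⟩, rfl⟩
      · rintro ⟨⟨μ, y'⟩, ⟨hμ0, hμI, hμ1, hμa⟩, rfl⟩
        exact (hull_iff v I _ 0).mpr ⟨μ, hμ0, hμI, hμ1, hμa⟩
    rw [hAim]
    exact (hZcomp.image continuous_snd).isClosed
  -- A is open
  have hopen : IsOpen A := by
    rw [isOpen_iff_forall_mem_open]
    intro a ha
    obtain ⟨μ, hμ0, hμI, hμ1, hμa⟩ := (hull_iff v I (↑a) 0).mp ha
    set f : ↥K → ℝ := fun y => ‖∑ k, μ k • v k ↑y‖ with hf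
    have hfc : Continuous f :=
      (continuous_finset_sum _ fun k _ => ((hvK k).const_smul (μ k))).norm
    refine ⟨f ⁻¹' Set.Iio (1 / C), ?_, hfc.isOpen_preimage _ isOpen_Iio, ?_⟩
    · intro y hy
      by_contra hyA
      have h1C := quant v (↑y) C hC (hctrl (↑y) y.2) I hyA
      have hw : (∑ k, μ k • v k ↑y) ∈ convexHull ℝ {w | ∃ i ∈ I, w = v i ↑y} :=
        (hull_iff v I (↑y) _).mpr ⟨μ, hμ0, hμI, hμ1, rfl⟩
      have := h1C _ hw
      have hlt : f y < 1 / C := hy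
      rw [hf] at hlt
      linarith
    · simp only [Set.mem_preimage, Set.mem_Iio, hf, hμa, norm_zero]
      positivity
  have : A = ∅ ∨ A = Set.univ := isClopen_iff.mp ⟨hclosed, hopen⟩
  rcases this with hemp | huniv
  · intro y hy hmem
    have : (⟨y, hy⟩ : ↥K) ∈ A := hmem
    rw [hemp] at this
    exact this
  · exfalso
    apply h0
    have : (⟨x, hx⟩ : ↥K) ∈ A := by rw [huniv]; trivial
    exact this

/-- pointwise reduction to controlled decompositions: any conical
decomposition `ρ` of `z` in the directions `v_k(x)` can be lowered to a decomposition
`ρ̄ ≤ ρ` of `z` with `Σ_k ρ̄_k ≤ (1/δ)|z|`. -/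
theorem stmt_13 (d N : ℕ)
    (K : Set (EuclideanSpace ℝ (Fin d))) (hKcomp : IsCompact K) (hKconn : IsConnected K)
    (v : Fin N → EuclideanSpace ℝ (Fin d) → EuclideanSpace ℝ (Fin d))
    (hv_cont : ∀ k, ContinuousOn (v k) K)
    (hv_unit : ∀ k, ∀ x ∈ K, ‖v k x‖ = 1)
    -- controlled decomposition hypothesis
    (hctrl : ∃ C : ℝ, 0 < C ∧ ∀ x ∈ K, ∀ z : EuclideanSpace ℝ (Fin d), ‖z‖ = 1 →
      ∀ ξ' : Fin N → ℝ, (∀ k, 0 ≤ ξ' k) →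
        ∃ Z : Fin N → ℝ, (∀ k, 0 ≤ Z k) ∧ (∑ k, Z k • v k x = z) ∧
          (∀ Z' : Fin N → ℝ, (∀ k, 0 ≤ Z' k) → ∑ k, Z' k • v k x = z →
            ∑ k, Z k * ξ' k ≤ ∑ k, Z' k * ξ' k) ∧ (∑ k, Z k ≤ C))
    -- δ is the constant from the dichotomy lemma
    (δ : ℝ) (hδ0 : 0 < δ) (hδ1 : δ < 1)
    (hδ : ∀ I : Finset (Fin N),
      (∀ x ∈ K, (0 : EuclideanSpace ℝ (Fin d)) ∉
          convexHull ℝ {w | ∃ i ∈ I, w = v i x}) →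
      ∀ x ∈ K, ∃ u : EuclideanSpace ℝ (Fin d), ‖u‖ = 1 ∧ ∀ i ∈ I, δ ≤ ⟪v i x, u⟫) :
    ∀ x ∈ K, ∀ z : EuclideanSpace ℝ (Fin d), ∀ ρ : Fin N → ℝ,
      (∀ k, 0 ≤ ρ k) → (∑ k, ρ k • v k x = z) →
      ∃ ρ' : Fin N → ℝ, (∀ k, 0 ≤ ρ' k ∧ ρ' k ≤ ρ k) ∧
        (∑ k, ρ' k • v k x = z) ∧ (∑ k, ρ' k ≤ (1 / δ) * ‖z‖) := by
  classical
  obtain ⟨C, hC0, hctrl⟩ := hctrl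
  intro x hx z ρ hρ0 hρsum
  -- the feasible set
  set F : Set (Fin N → ℝ) :=
    {σ | (∀ k, 0 ≤ σ k ∧ σ k ≤ ρ k) ∧ ∑ k, σ k • v k x = z} with hF
  have hρF : ρ ∈ F := ⟨fun k => ⟨hρ0 k, le_refl _⟩, hρsum⟩
  have hFne : F.Nonempty := ⟨ρ, hρF⟩
  have happly : ∀ k, Continuous fun σ : Fin N → ℝ => σ k := fun k => continuous_apply k
  have hFclosed : IsClosed F := by
    have c1 : IsClosed {σ : Fin N → ℝ | ∀ k, 0 ≤ σ k ∧ σ k ≤ ρ k} := by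
      rw [Set.setOf_forall]
      refine isClosed_iInter fun k => ?_
      exact (isClosed_le continuous_const (happly k)).inter
        (isClosed_le (happly k) continuous_const)
    have c2 : IsClosed {σ : Fin N → ℝ | ∑ k, σ k • v k x = z} :=
      isClosed_eq (continuous_finset_sum _ fun k _ => (happly k).smul continuous_const)
        continuous_const
    exact c1.inter c2
  have hFsub : F ⊆ Set.univ.pi fun k => Set.Icc 0 (ρ k) := by
    rintro σ ⟨h1, _⟩ k _
    exact ⟨(h1 k).1, (h1 k).2⟩
  have hFcomp : IsCompact F :=
    IsCompact.of_isClosed_subset (isCompact_univ_pi fun k => isCompact_Icc) hFclosed hFsub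
  -- minimize the total mass
  obtain ⟨σ, hσF, hσmin⟩ := hFcomp.exists_isMinOn hFne
    (f := fun σ : Fin N → ℝ => ∑ k, σ k)
    (continuous_finset_sum _ fun k _ => happly k).continuousOn
  set I : Finset (Fin N) := Finset.univ.filter fun k => 0 < σ k with hI
  -- at x, 0 is not in the convex hull of the active directions
  have h0 : (0 : EuclideanSpace ℝ (Fin d)) ∉ convexHull ℝ {w | ∃ i ∈ I, w = v i x} := by
    intro hmem
    obtain ⟨μ, hμ0, hμI, hμ1, hμ0sum⟩ := (hull_iff v I x 0).mp hmem
    -- the support of μ is nonempty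
    have hT : (Finset.univ.filter fun k => 0 < μ k).Nonempty := by
      by_contra hT
      rw [Finset.not_nonempty_iff_eq_empty, Finset.filter_eq_empty_iff] at hT
      have : ∑ k, μ k = 0 := Finset.sum_eq_zero fun k _ =>
        le_antisymm (not_lt.mp (hT (Finset.mem_univ k))) (hμ0 k)
      rw [hμ1] at this
      norm_num at this
    obtain ⟨i0, hi0T, hi0min⟩ :=
      Finset.exists_min_image _ (fun i => σ i / μ i) hT
    rw [Finset.mem_filter] at hi0T
    have hμi0 : 0 < μ i0 := hi0T.2
    have hσi0 : 0 < σ i0 := by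
      have : i0 ∈ I := by
        by_contra h
        exact absurd (hμI i0 h) (ne_of_gt hμi0)
      rw [hI, Finset.mem_filter] at this
      exact this.2
    set t := σ i0 / μ i0 with ht
    have ht0 : 0 < t := div_pos hσi0 hμi0
    set σ' : Fin N → ℝ := fun k => σ k - t * μ k with hσ'
    have hσ'F : σ' ∈ F := by
      constructor
      · intro k
        constructor
        · rcases eq_or_lt_of_le (hμ0 k) with h | h
          · simp only [hσ', ← h]
            have := ((hσF.1) k).1
            linarith
          · have hkT : k ∈ Finset.univ.filter fun k => 0 < μ k :=
              Finset.mem_filter.mpr ⟨Finset.mem_univ k, h⟩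
            have := hi0min k hkT
            have h2 : t * μ k ≤ σ k := by
              rw [le_div_iff₀ h] at this
              linarith [this]
            simp only [hσ']
            linarith
        · have h1 : 0 ≤ t * μ k := mul_nonneg ht0.le (hμ0 k)
          have := ((hσF.1) k).2
          simp only [hσ']
          linarith
      · have : ∑ k, σ' k • v k x
            = ∑ k, σ k • v k x - t • ∑ k, μ k • v k x := by
          rw [Finset.smul_sum, ← Finset.sum_sub_distrib]
          refine Finset.sum_congr rfl fun k _ => ?_
          rw [hσ', sub_smul, smul_smul]
        rw [this, hσF.2, hμ0sum, smul_zero, sub_zero]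
    have hlt : ∑ k, σ' k < ∑ k, σ k := by
      have : ∑ k, σ' k = ∑ k, σ k - t * ∑ k, μ k := by
        rw [Finset.mul_sum, ← Finset.sum_sub_distrib]
      rw [this, hμ1, mul_one]
      linarith
    exact absurd (hσmin hσ'F) (not_le.mpr hlt)
  -- by the dichotomy, 0 is not in the hull anywhere on K
  have hglob := dich K hKcomp hKconn v hv_cont C hC0 hctrl I x hx h0
  obtain ⟨u, hunorm, hu⟩ := hδ I hglob x hx
  refine ⟨σ, hσF.1, hσF.2, ?_⟩
  -- the mass bound
  have hinner : ⟪z, u⟫ = ∑ k, σ k * ⟪v k x, u⟫ := by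
    rw [← hσF.2, sum_inner]
    exact Finset.sum_congr rfl fun k _ => real_inner_smul_left _ _ _
  have hbound : δ * ∑ k, σ k ≤ ⟪z, u⟫ := by
    rw [hinner, Finset.mul_sum]
    refine Finset.sum_le_sum fun k _ => ?_
    rcases eq_or_lt_of_le ((hσF.1 k).1) with h | h
    · rw [← h]; ring_nf; exact le_refl _
    · have hkI : k ∈ I := Finset.mem_filter.mpr ⟨Finset.mem_univ k, h⟩
      have := hu k hkI
      calc δ * σ k = σ k * δ := by ring
      _ ≤ σ k * ⟪v k x, u⟫ := mul_le_mul_of_nonneg_left this h.le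
  have hzn : ⟪z, u⟫ ≤ ‖z‖ := by
    calc ⟪z, u⟫ ≤ ‖z‖ * ‖u‖ := real_inner_le_norm z u
    _ = ‖z‖ := by rw [hunorm, mul_one]
  rw [div_mul_eq_mul_div, le_div_iff₀ hδ0]
  calc (∑ k, σ k) * δ = δ * ∑ k, σ k := by ring
  _ ≤ ‖z‖ := le_trans hbound hzn
  _ = 1 * ‖z‖ := by ring
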